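/- Let G and G' be finite abelian groups of equal order with normalized character tables 𝒞 and 𝒞' respectively. Then a matrix U ∈ ℂ^{G×G'} is a (G,G')-transformation matrix if and only if U = 𝒞†·P^π·𝒞' for some bijection π from Ĝ' to Ĝ, where P^π is the Ĝ × Ĝ' permutation matrix with P^π_{χ,χ'} = 1 if χ = π(χ') and 0 otherwise. In particular, the set of (G,G')-transformation matrices is finite. -/

import Mathlib

open scoped BigOperators Classical

/-- A `(G,G')`-transformation matrix: `U` is unitary, `conj U_{a,b} = U_{a⁻¹,b⁻¹}`, and
`U_{ab,c} = ∑_{x y = c} U_{a,x} U_{b,y}`. -/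
def IsTransMat {G G' : Type*} [Group G] [Group G'] [Fintype G] [Fintype G']
    [DecidableEq G] [DecidableEq G'] (U : Matrix G G' ℂ) : Prop :=
  (U * U.conjTranspose = 1 ∧ U.conjTranspose * U = 1) ∧
  (∀ (a : G) (b : G'), star (U a b) = U a⁻¹ b⁻¹) ∧
  (∀ (a b : G) (c : G'),
    U (a * b) c = ∑ x : G', ∑ y : G', if x * y = c then U a x * U b y else 0)

/-- The normalized character table of a finite abelian group `G`: the `Ĝ × G` matrix
with `(χ, a)` entry `χ(a)/√|G|`, where `Ĝ = G →* ℂˣ` is the character group. -/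
noncomputable def charTable (G : Type*) [CommGroup G] [Fintype G] :
    Matrix (G →* ℂˣ) G ℂ :=
  Matrix.of fun χ a => ((χ a : ℂˣ) : ℂ) / (Real.sqrt (Fintype.card G) : ℂ)

/-- The `Ĝ × Ĝ'` permutation matrix of a bijection `π` from `Ĝ'` to `Ĝ`. -/
noncomputable def charPermMatrix {G G' : Type*} [CommGroup G] [CommGroup G']
    (π : (G' →* ℂˣ) ≃ (G →* ℂˣ)) : Matrix (G →* ℂˣ) (G' →* ℂˣ) ℂ :=
  Matrix.of fun χ χ' => if χ = π χ' then 1 else 0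
set_option linter.unusedSectionVars false
section Aux
variable {H : Type*} [CommGroup H] [Fintype H]

lemma aux_mul_inv (χ : H →* ℂˣ) (a : H) : ((χ a : ℂˣ) : ℂ) * ((χ a⁻¹ : ℂˣ) : ℂ) = 1 := by
  rw [← Units.val_mul, ← map_mul, mul_inv_cancel, map_one, Units.val_one]

lemma aux_star (χ : H →* ℂˣ) (a : H) : star ((χ a : ℂˣ) : ℂ) = ((χ a⁻¹ : ℂˣ) : ℂ) := by
  have hpow : ((χ a : ℂˣ) : ℂ) ^ (Fintype.card H) = 1 := by
    rw [← Units.val_pow_eq_pow_val, ← map_pow, pow_card_eq_one, map_one, Units.val_one]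
  have hnorm : ‖((χ a : ℂˣ) : ℂ)‖ = 1 :=
    Complex.norm_eq_one_of_pow_eq_one hpow Fintype.card_ne_zero
  have h1 : ((χ a : ℂˣ) : ℂ) * star ((χ a : ℂˣ) : ℂ) = 1 := by
    rw [Complex.star_def, Complex.mul_conj]
    norm_cast
    rw [Complex.normSq_eq_norm_sq, hnorm, one_pow]
  have h2 := aux_mul_inv χ a
  calc star ((χ a : ℂˣ) : ℂ)
      = star ((χ a : ℂˣ) : ℂ) * (((χ a : ℂˣ) : ℂ) * ((χ a⁻¹ : ℂˣ) : ℂ)) := by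
        rw [h2, mul_one]
    _ = (((χ a : ℂˣ) : ℂ) * star ((χ a : ℂˣ) : ℂ)) * ((χ a⁻¹ : ℂˣ) : ℂ) := by ring
    _ = ((χ a⁻¹ : ℂˣ) : ℂ) := by rw [h1, one_mul]

lemma aux_sum_eq_zero (χ : H →* ℂˣ) (hχ : χ ≠ 1) : ∑ a, ((χ a : ℂˣ) : ℂ) = 0 := by
  obtain ⟨b, hb⟩ : ∃ b, χ b ≠ 1 := by
    by_contra h
    push_neg at h
    exact hχ (MonoidHom.ext fun x => h x)
  have hb' : ((χ b : ℂˣ) : ℂ) ≠ 1 := fun h => hb (Units.ext h)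
  have key : ((χ b : ℂˣ) : ℂ) * ∑ a, ((χ a : ℂˣ) : ℂ) = ∑ a, ((χ a : ℂˣ) : ℂ) := by
    rw [Finset.mul_sum]
    exact Fintype.sum_equiv (Equiv.mulLeft b) _ _ (fun a => by
      simp [← Units.val_mul, ← map_mul])
  have h2 : (((χ b : ℂˣ) : ℂ) - 1) * ∑ a, ((χ a : ℂˣ) : ℂ) = 0 := by linear_combination key
  rcases mul_eq_zero.mp h2 with h | h
  · exact absurd (sub_eq_zero.mp h) hb'
  · exact h

lemma aux_orth_row (χ ψ : H →* ℂˣ) :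
    ∑ a, ((χ a : ℂˣ) : ℂ) * star ((ψ a : ℂˣ) : ℂ) =
      if χ = ψ then (Fintype.card H : ℂ) else 0 := by
  have hterm : ∀ a, ((χ a : ℂˣ) : ℂ) * star ((ψ a : ℂˣ) : ℂ) = (((χ * ψ⁻¹) a : ℂˣ) : ℂ) := by
    intro a
    rw [aux_star, ← Units.val_mul]
    norm_cast
    simp
  simp_rw [hterm]
  by_cases h : χ = ψ
  · subst h
    simp [Finset.card_univ]
  · rw [if_neg h]
    exact aux_sum_eq_zero _ (by
      intro hc
      exact h (mul_inv_eq_one.mp hc))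

variable [Fintype (H →* ℂˣ)]

lemma aux_card : Fintype.card (H →* ℂˣ) = Fintype.card H := by
  have : NeZero ((Monoid.exponent H : ℂ)) := by
    have := Monoid.exponent_ne_zero_of_finite (G := H)
    exact ⟨by exact_mod_cast this⟩
  obtain ⟨e⟩ := CommGroup.monoidHom_mulEquiv_of_hasEnoughRootsOfUnity H ℂ
  exact Fintype.card_congr e.toEquiv

lemma aux_sum_char_eq_zero {a : H} (ha : a ≠ 1) : ∑ χ : H →* ℂˣ, ((χ a : ℂˣ) : ℂ) = 0 := by
  have : NeZero ((Monoid.exponent H : ℂ)) := by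
    have := Monoid.exponent_ne_zero_of_finite (G := H)
    exact ⟨by exact_mod_cast this⟩
  obtain ⟨φ, hφ⟩ := CommGroup.exists_apply_ne_one_of_hasEnoughRootsOfUnity H ℂ ha
  have hφ' : ((φ a : ℂˣ) : ℂ) ≠ 1 := fun h => hφ (Units.ext h)
  have key : ((φ a : ℂˣ) : ℂ) * ∑ χ : H →* ℂˣ, ((χ a : ℂˣ) : ℂ)
      = ∑ χ : H →* ℂˣ, ((χ a : ℂˣ) : ℂ) := by
    rw [Finset.mul_sum]
    exact Fintype.sum_equiv (Equiv.mulLeft φ) _ _ (fun χ => by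
      simp [← Units.val_mul])
  have h2 : (((φ a : ℂˣ) : ℂ) - 1) * ∑ χ : H →* ℂˣ, ((χ a : ℂˣ) : ℂ) = 0 := by
    linear_combination key
  rcases mul_eq_zero.mp h2 with h | h
  · exact absurd (sub_eq_zero.mp h) hφ'
  · exact h

lemma aux_orth_col (a b : H) :
    ∑ χ : H →* ℂˣ, ((χ a : ℂˣ) : ℂ) * star ((χ b : ℂˣ) : ℂ) =
      if a = b then (Fintype.card H : ℂ) else 0 := by
  have hterm : ∀ χ : H →* ℂˣ, ((χ a : ℂˣ) : ℂ) * star ((χ b : ℂˣ) : ℂ)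
      = ((χ (a * b⁻¹) : ℂˣ) : ℂ) := by
    intro χ
    rw [aux_star, ← Units.val_mul]
    norm_cast
    simp
  simp_rw [hterm]
  by_cases h : a = b
  · subst h
    simp [aux_card, Finset.card_univ]
  · rw [if_neg h]
    exact aux_sum_char_eq_zero (by
      intro hc
      exact h (by rwa [mul_inv_eq_one] at hc))

lemma aux_sqrt_mul_self :
    ((Real.sqrt (Fintype.card H) : ℝ) : ℂ) * ((Real.sqrt (Fintype.card H) : ℝ) : ℂ)
      = (Fintype.card H : ℂ) := by
  rw [← Complex.ofReal_mul, Real.mul_self_sqrt (Nat.cast_nonneg _)]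
  norm_cast

lemma aux_card_ne_zero : (Fintype.card H : ℂ) ≠ 0 := by
  exact_mod_cast (Fintype.card_ne_zero (α := H))

lemma charTable_mul_conjTranspose :
    charTable H * (charTable H).conjTranspose = 1 := by
  ext χ ψ
  simp only [Matrix.mul_apply, Matrix.conjTranspose_apply, charTable, Matrix.of_apply,
    Matrix.one_apply, star_div₀, Complex.star_def, Complex.conj_ofReal]
  simp_rw [div_mul_div_comm, ← Finset.sum_div, ← Complex.star_def]
  rw [aux_orth_row χ ψ, aux_sqrt_mul_self]
  by_cases h : χ = ψ <;> simp [h, aux_card_ne_zero]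

lemma conjTranspose_mul_charTable [Fintype (H →* ℂˣ)] :
    (charTable H).conjTranspose * charTable H = 1 := by
  ext a b
  simp only [Matrix.mul_apply, Matrix.conjTranspose_apply, charTable, Matrix.of_apply,
    Matrix.one_apply, star_div₀, Complex.star_def, Complex.conj_ofReal]
  simp_rw [div_mul_div_comm, ← Finset.sum_div, ← Complex.star_def]
  have : ∀ χ : H →* ℂˣ, star ((χ a : ℂˣ) : ℂ) * ((χ b : ℂˣ) : ℂ)
      = ((χ b : ℂˣ) : ℂ) * star ((χ a : ℂˣ) : ℂ) := fun χ => mul_comm _ _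
  simp_rw [this]
  rw [aux_orth_col b a, aux_sqrt_mul_self]
  by_cases h : a = b <;> simp [h, eq_comm, aux_card_ne_zero]
end Aux

section Entry
variable {G G' : Type*} [CommGroup G] [CommGroup G'] [Fintype G] [Fintype G']
  [Fintype (G →* ℂˣ)] [Fintype (G' →* ℂˣ)]

variable [DecidableEq G] [DecidableEq G']

lemma charPerm_mul_conjTranspose (π : (G' →* ℂˣ) ≃ (G →* ℂˣ)) :
    charPermMatrix π * (charPermMatrix π).conjTranspose = 1 := by
  ext χ ψ
  simp only [Matrix.mul_apply, Matrix.conjTranspose_apply, charPermMatrix, Matrix.of_apply,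
    Matrix.one_apply, apply_ite (star : ℂ → ℂ), star_one, star_zero, ite_mul, one_mul, zero_mul]
  rw [Equiv.sum_comp π (fun c => if χ = c then (if ψ = c then (1:ℂ) else 0) else 0)]
  simp only [Finset.sum_ite_eq, Finset.mem_univ, if_true]
  by_cases h : χ = ψ
  · subst h; simp
  · simp [h, Ne.symm h]

lemma conjTranspose_mul_charPerm (π : (G' →* ℂˣ) ≃ (G →* ℂˣ)) :
    (charPermMatrix π).conjTranspose * charPermMatrix π = 1 := by
  ext χ' ψ'
  simp only [Matrix.mul_apply, Matrix.conjTranspose_apply, charPermMatrix, Matrix.of_apply,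
    Matrix.one_apply, apply_ite (star : ℂ → ℂ), star_one, star_zero, ite_mul, one_mul, zero_mul,
    mul_ite, mul_one, mul_zero]
  simp only [Finset.sum_ite_eq', Finset.mem_univ, if_true]
  by_cases h : χ' = ψ'
  · subst h; simp
  · simp [h, Ne.symm h, fun hc : π χ' = π ψ' => h (π.injective hc)]


lemma trans_entry (hcard : Fintype.card G = Fintype.card G')
    (π : (G' →* ℂˣ) ≃ (G →* ℂˣ)) (a : G) (b : G') :
    ((charTable G).conjTranspose * charPermMatrix π * charTable G') a b
      = (∑ χ' : G' →* ℂˣ, star (((π χ') a : ℂˣ) : ℂ) * ((χ' b : ℂˣ) : ℂ))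
          / (Fintype.card G : ℂ) := by
  have hss : ((Real.sqrt (Fintype.card G) : ℝ) : ℂ) * ((Real.sqrt (Fintype.card G') : ℝ) : ℂ)
      = (Fintype.card G : ℂ) := by
    rw [hcard]; exact aux_sqrt_mul_self
  simp only [Matrix.mul_apply, Matrix.conjTranspose_apply, charTable, charPermMatrix,
    Matrix.of_apply, mul_ite, mul_one, mul_zero, Finset.sum_ite_eq', Finset.mem_univ, if_true,
    star_div₀, Complex.star_def, Complex.conj_ofReal]
  simp_rw [div_mul_div_comm, ← Finset.sum_div, ← Complex.star_def, hss]
end Entry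


section Bwd
variable {G G' : Type*} [CommGroup G] [CommGroup G'] [Fintype G] [Fintype G']
  [DecidableEq G] [DecidableEq G'] [Fintype (G →* ℂˣ)] [Fintype (G' →* ℂˣ)]

lemma isTransMat_perm (hcard : Fintype.card G = Fintype.card G')
    (π : (G' →* ℂˣ) ≃ (G →* ℂˣ)) :
    IsTransMat ((charTable G).conjTranspose * charPermMatrix π * charTable G') := by
  set C := charTable G
  set C' := charTable G'
  set P := charPermMatrix π
  set U := C.conjTranspose * P * C' with hUdef
  have hn : (Fintype.card G : ℂ) ≠ 0 := aux_card_ne_zero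
  have hn' : ((Fintype.card G' : ℕ) : ℂ) = (Fintype.card G : ℂ) := by rw [hcard]
  have hUH : U.conjTranspose = C'.conjTranspose * (P.conjTranspose * C) := by
    rw [hUdef]
    simp only [Matrix.conjTranspose_mul, Matrix.conjTranspose_conjTranspose, Matrix.mul_assoc]
  refine ⟨⟨?_, ?_⟩, ?_, ?_⟩
  · rw [hUH, hUdef]
    simp only [Matrix.mul_assoc]
    rw [← Matrix.mul_assoc C' C'.conjTranspose, charTable_mul_conjTranspose, Matrix.one_mul,
      ← Matrix.mul_assoc P P.conjTranspose, charPerm_mul_conjTranspose, Matrix.one_mul,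
      conjTranspose_mul_charTable]
    ext i j
    simp [Matrix.one_apply]
  · rw [hUH, hUdef]
    simp only [Matrix.mul_assoc]
    rw [← Matrix.mul_assoc C C.conjTranspose, charTable_mul_conjTranspose, Matrix.one_mul,
      ← Matrix.mul_assoc P.conjTranspose P, conjTranspose_mul_charPerm, Matrix.one_mul,
      conjTranspose_mul_charTable]
    ext i j
    simp [Matrix.one_apply]
  · intro a b
    rw [hUdef, trans_entry hcard π a b, trans_entry hcard π a⁻¹ b⁻¹, star_div₀, star_sum]
    congr 1
    · refine Finset.sum_congr rfl fun χ' _ => ?_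
      rw [star_mul', star_star, aux_star (π χ') a⁻¹, inv_inv, aux_star χ' b]
    · exact star_natCast _
  · intro a b c
    have key : ∀ x : G', (∑ y : G', if x * y = c then U a x * U b y else 0)
        = U a x * U b (x⁻¹ * c) := by
      intro x
      rw [Finset.sum_eq_single (x⁻¹ * c)]
      · rw [if_pos (by group)]
      · intro y _ hy
        rw [if_neg (fun h => hy (by rw [← h]; group))]
      · intro h; exact absurd (Finset.mem_univ _) h
    simp only [key]
    simp only [hUdef, C, P, C', trans_entry hcard π]
    simp_rw [div_mul_div_comm, ← Finset.sum_div]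
    have hnum : (∑ x : G', (∑ χ' : G' →* ℂˣ, star (((π χ') a : ℂˣ) : ℂ) * ((χ' x : ℂˣ) : ℂ))
          * (∑ ψ' : G' →* ℂˣ, star (((π ψ') b : ℂˣ) : ℂ) * ((ψ' (x⁻¹ * c) : ℂˣ) : ℂ)))
        = (∑ χ' : G' →* ℂˣ, star (((π χ') (a * b) : ℂˣ) : ℂ) * ((χ' c : ℂˣ) : ℂ))
            * (Fintype.card G : ℂ) := by
      simp_rw [Finset.sum_mul_sum]
      rw [Finset.sum_comm]
      refine Eq.trans (Finset.sum_congr rfl fun χ' _ => Finset.sum_comm) ?_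
      rw [Finset.sum_mul]
      refine Finset.sum_congr rfl fun χ' _ => ?_
      have hterm : ∀ (ψ' : G' →* ℂˣ) (x : G'),
          (star (((π χ') a : ℂˣ) : ℂ) * ((χ' x : ℂˣ) : ℂ))
            * (star (((π ψ') b : ℂˣ) : ℂ) * ((ψ' (x⁻¹ * c) : ℂˣ) : ℂ))
          = (star (((π χ') a : ℂˣ) : ℂ) * star (((π ψ') b : ℂˣ) : ℂ) * ((ψ' c : ℂˣ) : ℂ))
              * (((χ' x : ℂˣ) : ℂ) * star ((ψ' x : ℂˣ) : ℂ)) := by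
        intro ψ' x
        rw [map_mul, map_inv, Units.val_mul, aux_star ψ' x, map_inv]
        try push_cast
        try ring
      simp_rw [hterm, ← Finset.mul_sum, aux_orth_row, mul_ite, mul_zero]
      rw [Finset.sum_ite_eq Finset.univ χ'
        (fun ψ' => star (((π χ') a : ℂˣ) : ℂ) * star (((π ψ') b : ℂˣ) : ℂ) * ((ψ' c : ℂˣ) : ℂ)
          * (Fintype.card G' : ℂ))]
      rw [if_pos (Finset.mem_univ _), map_mul, Units.val_mul, star_mul', hn']
      try ring
    rw [hnum, mul_div_mul_right _ _ hn]
end Bwd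

section Fwd
variable {G G' : Type*} [CommGroup G] [CommGroup G'] [Fintype G] [Fintype G']
  [DecidableEq G] [DecidableEq G'] [Fintype (G →* ℂˣ)] [Fintype (G' →* ℂˣ)]

lemma isTransMat_exists (hcard : Fintype.card G = Fintype.card G') {U : Matrix G G' ℂ}
    (hU : IsTransMat U) :
    ∃ π : (G' →* ℂˣ) ≃ (G →* ℂˣ),
      U = (charTable G).conjTranspose * charPermMatrix π * charTable G' := by
  obtain ⟨⟨hU1, hU2⟩, hstar, hmul⟩ := hU
  have hn : (Fintype.card G : ℂ) ≠ 0 := aux_card_ne_zero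
  have hn'' : (Fintype.card G' : ℂ) ≠ 0 := aux_card_ne_zero
  have hn' : ((Fintype.card G' : ℕ) : ℂ) = (Fintype.card G : ℂ) := by rw [hcard]
  set f : (G' →* ℂˣ) → G → ℂ := fun χ' a => ∑ x, U a x * ((χ' x : ℂˣ) : ℂ) with hf
  have hmul' : ∀ (χ' : G' →* ℂˣ) (a b : G), f χ' (a * b) = f χ' a * f χ' b := by
    intro χ' a b
    have h1 : f χ' (a * b) = ∑ x : G', ∑ y : G', U a x * U b y * ((χ' (x * y) : ℂˣ) : ℂ) := by
      rw [hf]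
      calc (∑ c, U (a*b) c * ((χ' c : ℂˣ) : ℂ))
          = ∑ c, ∑ x, ∑ y, (if x * y = c then U a x * U b y else 0) * ((χ' c : ℂˣ) : ℂ) := by
            simp_rw [hmul, Finset.sum_mul]
        _ = ∑ x, ∑ y, ∑ c, (if x * y = c then U a x * U b y else 0) * ((χ' c : ℂˣ) : ℂ) := by
            rw [Finset.sum_comm]
            exact Finset.sum_congr rfl fun x _ => Finset.sum_comm
        _ = ∑ x, ∑ y, U a x * U b y * ((χ' (x * y) : ℂˣ) : ℂ) := by
            refine Finset.sum_congr rfl fun x _ => Finset.sum_congr rfl fun y _ => ?_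
            simp_rw [ite_mul, zero_mul]
            rw [Finset.sum_ite_eq Finset.univ (x*y)
              (fun c => U a x * U b y * ((χ' c : ℂˣ) : ℂ))]
            simp
    rw [h1, hf]
    rw [Finset.sum_mul_sum]
    refine Finset.sum_congr rfl fun x _ => Finset.sum_congr rfl fun y _ => ?_
    rw [map_mul, Units.val_mul]
    ring
  have hstar' : ∀ (χ' : G' →* ℂˣ) (a : G), star (f χ' a) = f χ' a⁻¹ := by
    intro χ' a
    rw [hf]
    simp only [star_sum, star_mul']
    refine Fintype.sum_equiv (Equiv.inv G') _ _ fun x => ?_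
    simp only [Equiv.inv_apply]
    rw [hstar, aux_star]
  have horth : ∀ χ' ψ' : G' →* ℂˣ, ∑ a, f χ' a * star (f ψ' a)
      = if χ' = ψ' then (Fintype.card G' : ℂ) else 0 := by
    intro χ' ψ'
    rw [hf]
    calc ∑ a, (∑ x, U a x * ((χ' x : ℂˣ) : ℂ)) * star (∑ y, U a y * ((ψ' y : ℂˣ) : ℂ))
        = ∑ a, ∑ x, ∑ y, (U a x * ((χ' x : ℂˣ) : ℂ))
            * (star (U a y) * star ((ψ' y : ℂˣ) : ℂ)) := by
          simp_rw [star_sum, star_mul', Finset.sum_mul_sum]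
      _ = ∑ x, ∑ y, (((χ' x : ℂˣ) : ℂ) * star ((ψ' y : ℂˣ) : ℂ))
            * ∑ a, star (U a y) * U a x := by
          rw [Finset.sum_comm]
          refine Finset.sum_congr rfl fun x _ => ?_
          rw [Finset.sum_comm]
          refine Finset.sum_congr rfl fun y _ => ?_
          rw [Finset.mul_sum]
          exact Finset.sum_congr rfl fun a _ => by ring
      _ = ∑ x, ∑ y, (((χ' x : ℂˣ) : ℂ) * star ((ψ' y : ℂˣ) : ℂ))
            * (if y = x then 1 else 0) := by
          refine Finset.sum_congr rfl fun x _ => Finset.sum_congr rfl fun y _ => ?_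
          congr 1
          have h := congrFun (congrFun hU2 y) x
          rw [Matrix.mul_apply] at h
          simp only [Matrix.conjTranspose_apply] at h
          rw [h, Matrix.one_apply]
      _ = ∑ x, ((χ' x : ℂˣ) : ℂ) * star ((ψ' x : ℂˣ) : ℂ) := by
          refine Finset.sum_congr rfl fun x _ => ?_
          simp_rw [mul_ite, mul_one, mul_zero]
          rw [Finset.sum_ite_eq' Finset.univ x
            (fun y => ((χ' x : ℂˣ) : ℂ) * star ((ψ' y : ℂˣ) : ℂ))]
          simp
      _ = _ := aux_orth_row χ' ψ'
  have hnonzero : ∀ χ' : G' →* ℂˣ, ∃ a, f χ' a ≠ 0 := by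
    intro χ'
    by_contra h
    push_neg at h
    have h0 := horth χ' χ'
    rw [if_pos rfl] at h0
    simp only [h, zero_mul, Finset.sum_const_zero] at h0
    exact hn'' h0.symm
  have hone : ∀ χ' : G' →* ℂˣ, f χ' 1 = 1 := by
    intro χ'
    obtain ⟨a, ha⟩ := hnonzero χ'
    have h1 : f χ' a * f χ' 1 = f χ' a * 1 := by rw [← hmul' χ' a 1, mul_one, mul_one]
    exact mul_left_cancel₀ ha h1
  have hinvmul : ∀ (χ' : G' →* ℂˣ) (a : G), f χ' a * f χ' a⁻¹ = 1 := by
    intro χ' a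
    rw [← hmul', mul_inv_cancel, hone]
  have hne : ∀ (χ' : G' →* ℂˣ) (a : G), f χ' a ≠ 0 :=
    fun χ' a => left_ne_zero_of_mul_eq_one (hinvmul χ' a)
  set σ : (G' →* ℂˣ) → (G →* ℂˣ) := fun χ' => MonoidHom.mk'
    (fun a => Units.mk0 (f χ' a) (hne χ' a))
    (fun a b => Units.ext (by
      simp only [Units.val_mul, Units.val_mk0]
      exact hmul' χ' a b)) with hσ
  have hσval : ∀ (χ' : G' →* ℂˣ) (a : G), ((σ χ' a : ℂˣ) : ℂ) = f χ' a := fun _ _ => rfl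
  set p : (G' →* ℂˣ) → (G →* ℂˣ) := fun χ' => (σ χ'⁻¹)⁻¹ with hp
  have hp_inj : Function.Injective p := by
    intro χ₁ χ₂ h12
    have hσeq : σ χ₁⁻¹ = σ χ₂⁻¹ := inv_injective h12
    have hfeq : ∀ a, f χ₁⁻¹ a = f χ₂⁻¹ a := by
      intro a
      rw [← hσval, ← hσval, hσeq]
    have hchi : χ₁⁻¹ = χ₂⁻¹ := by
      by_contra hc
      have h0 := horth χ₁⁻¹ χ₂⁻¹
      rw [if_neg hc] at h0
      have h1 := horth χ₁⁻¹ χ₁⁻¹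
      rw [if_pos rfl] at h1
      simp only [fun a => (hfeq a).symm] at h0
      rw [h0] at h1
      exact hn'' h1.symm
    exact inv_injective hchi
  have hp_bij : Function.Bijective p :=
    (Fintype.bijective_iff_injective_and_card p).mpr
      ⟨hp_inj, by rw [aux_card, aux_card, hcard]⟩
  refine ⟨Equiv.ofBijective p hp_bij, ?_⟩
  ext a b
  rw [trans_entry hcard (Equiv.ofBijective p hp_bij) a b]
  have hterm : ∀ χ' : G' →* ℂˣ, star (((p χ') a : ℂˣ) : ℂ) = f χ'⁻¹ a := by
    intro χ'
    have h1 : (((p χ') a : ℂˣ) : ℂ) = (f χ'⁻¹ a)⁻¹ := by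
      rw [hp]
      simp only [MonoidHom.inv_apply, Units.val_inv_eq_inv_val, hσval]
    rw [h1, star_inv₀, hstar' χ'⁻¹ a]
    exact inv_eq_of_mul_eq_one_left (hinvmul χ'⁻¹ a)
  have hsum : ∑ χ' : G' →* ℂˣ, f χ' a * star ((χ' b : ℂˣ) : ℂ)
      = U a b * (Fintype.card G' : ℂ) := by
    rw [hf]
    calc ∑ χ' : G' →* ℂˣ, (∑ x, U a x * ((χ' x : ℂˣ) : ℂ)) * star ((χ' b : ℂˣ) : ℂ)
        = ∑ χ' : G' →* ℂˣ, ∑ x, U a x * (((χ' x : ℂˣ) : ℂ) * star ((χ' b : ℂˣ) : ℂ)) := by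
          refine Finset.sum_congr rfl fun χ' _ => ?_
          rw [Finset.sum_mul]
          exact Finset.sum_congr rfl fun x _ => by ring
      _ = ∑ x, U a x * ∑ χ' : G' →* ℂˣ, ((χ' x : ℂˣ) : ℂ) * star ((χ' b : ℂˣ) : ℂ) := by
          rw [Finset.sum_comm]
          exact Finset.sum_congr rfl fun x _ => (Finset.mul_sum _ _ _).symm
      _ = ∑ x, U a x * (if x = b then (Fintype.card G' : ℂ) else 0) := by
          refine Finset.sum_congr rfl fun x _ => ?_
          rw [aux_orth_col]
          congr
      _ = U a b * (Fintype.card G' : ℂ) := by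
          simp_rw [mul_ite, mul_zero]
          rw [Finset.sum_ite_eq' Finset.univ b
            (fun x => U a x * (Fintype.card G' : ℂ))]
          simp
  have hkey : (∑ χ' : G' →* ℂˣ,
        star (((Equiv.ofBijective p hp_bij χ') a : ℂˣ) : ℂ) * ((χ' b : ℂˣ) : ℂ))
      = U a b * (Fintype.card G' : ℂ) := by
    calc ∑ χ' : G' →* ℂˣ, star (((Equiv.ofBijective p hp_bij χ') a : ℂˣ) : ℂ) * ((χ' b : ℂˣ) : ℂ)
        = ∑ χ' : G' →* ℂˣ, f χ'⁻¹ a * ((χ' b : ℂˣ) : ℂ) :=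
          Finset.sum_congr rfl fun χ' _ => by
            rw [show (Equiv.ofBijective p hp_bij χ') = p χ' from rfl, hterm χ']
      _ = ∑ χ' : G' →* ℂˣ, f χ' a * ((χ'⁻¹ b : ℂˣ) : ℂ) := by
          refine Fintype.sum_equiv (Equiv.inv (G' →* ℂˣ)) _ _ fun χ' => ?_
          simp only [Equiv.inv_apply, inv_inv]
      _ = ∑ χ' : G' →* ℂˣ, f χ' a * star ((χ' b : ℂˣ) : ℂ) := by
          refine Finset.sum_congr rfl fun χ' _ => ?_
          congr 1
          rw [aux_star χ' b]
          congr 1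
          simp [MonoidHom.inv_apply]
      _ = U a b * (Fintype.card G' : ℂ) := hsum
  rw [hkey, hn', mul_div_cancel_right₀ _ hn]
end Fwd

theorem stmt15 {G G' : Type*} [CommGroup G] [CommGroup G'] [Fintype G] [Fintype G']
    [DecidableEq G] [DecidableEq G']
    [Fintype (G →* ℂˣ)] [Fintype (G' →* ℂˣ)]
    (hcard : Fintype.card G = Fintype.card G') :
    (∀ U : Matrix G G' ℂ,
      IsTransMat U ↔
        ∃ π : (G' →* ℂˣ) ≃ (G →* ℂˣ),
          U = (charTable G).conjTranspose * charPermMatrix π * charTable G') ∧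
    {U : Matrix G G' ℂ | IsTransMat U}.Finite := by
  have hiff : ∀ U : Matrix G G' ℂ,
      IsTransMat U ↔
        ∃ π : (G' →* ℂˣ) ≃ (G →* ℂˣ),
          U = (charTable G).conjTranspose * charPermMatrix π * charTable G' := by
    intro U
    constructor
    · exact fun hU => isTransMat_exists hcard hU
    · rintro ⟨π, rfl⟩
      exact isTransMat_perm hcard π
  refine ⟨hiff, ?_⟩
  have hsub : {U : Matrix G G' ℂ | IsTransMat U} ⊆ Set.range
      (fun π : (G' →* ℂˣ) ≃ (G →* ℂˣ) =>
        (charTable G).conjTranspose * charPermMatrix π * charTable G') := by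
    intro U hU
    obtain ⟨π, hπ⟩ := (hiff U).mp hU
    exact ⟨π, hπ.symm⟩
  exact Set.Finite.subset (Set.finite_range _) hsub
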